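/- arXiv:2208.12998 — 2 statements merged into one kernel-verified Lean document; each statement's English description precedes it below -/
import Mathlib

section
/- Fix a nonzero real number λ and an integer r ≥ 0. In the ring ℝ[x][[t]] of formal power series in t with coefficients in the polynomial ring ℝ[x], the series x·(e_λ(t) − 1) has zero constant term in t, so 1 − x·(e_λ(t) − 1) is invertible, and e_λ(t)^r · (1 − x·(e_λ(t) − 1))^{−1} = Σ_{n=0}^{∞} F^{(r)}_{n,λ}(x) t^n / n!. -/
open Finset PowerSeries

noncomputable section

/-- The degenerate falling factorial `(x)_{n,λ} = x(x-λ)⋯(x-(n-1)λ)`. -/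
def dff (lam x : ℝ) (n : ℕ) : ℝ := ∏ i ∈ Finset.range n, (x - i * lam)

/-- The ordinary falling factorial `(x)_n = x(x-1)⋯(x-n+1)`. -/
def ff (x : ℝ) (n : ℕ) : ℝ := ∏ i ∈ Finset.range n, (x - i)

/-- The degenerate exponential `e_λ(t) = ∑_{n=0}^∞ (1)_{n,λ} t^n / n!`, viewed in the ring
`ℝ[x][[t]]` of formal power series with coefficients in the polynomial ring `ℝ[x]`. -/
def elamP (lam : ℝ) : PowerSeries (Polynomial ℝ) :=
  PowerSeries.mk fun n => Polynomial.C (dff lam 1 n / n.factorial)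

lemma dff_zero (lam x : ℝ) : dff lam x 0 = 1 := by simp [dff]

lemma dff_succ (lam x : ℝ) (n : ℕ) : dff lam x (n + 1) = dff lam x n * (x - n * lam) := by
  simp [dff, Finset.prod_range_succ]

lemma ff_zero (x : ℝ) : ff x 0 = 1 := by simp [ff]

lemma ff_succ (x : ℝ) (n : ℕ) : ff x (n + 1) = ff x n * (x - n) := by
  simp [ff, Finset.prod_range_succ]

lemma dff_nat_zero (lam : ℝ) (n : ℕ) : dff lam ((0 : ℕ) : ℝ) n = if n = 0 then 1 else 0 := by
  cases n with
  | zero => simp [dff]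
  | succ n =>
    rw [if_neg (Nat.succ_ne_zero n)]
    apply Finset.prod_eq_zero (Finset.mem_range.mpr (Nat.succ_pos n))
    simp

lemma ff_nat (j m : ℕ) : ff (j : ℝ) m = (m.factorial : ℝ) * (j.choose m) := by
  induction m with
  | zero => simp [ff]
  | succ m ih =>
    rw [ff_succ, ih]
    rcases lt_or_ge j (m + 1) with h | h
    · rcases lt_or_eq_of_le (Nat.lt_succ_iff.mp h) with h' | h'
      · rw [Nat.choose_eq_zero_of_lt h', Nat.choose_eq_zero_of_lt (Nat.lt_succ_of_lt h')]
        simp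
      · rw [Nat.choose_eq_zero_of_lt (by omega : j < m + 1)]
        rw [h']; simp
    · have hmj : m ≤ j := by omega
      have hc := Nat.choose_succ_right_eq j m
      have hcast : (j.choose (m+1) : ℝ) * (m+1) = (j.choose m : ℝ) * ((j : ℝ) - m) := by
        have := congrArg (fun z : ℕ => (z : ℝ)) hc
        push_cast [Nat.cast_sub hmj] at this
        exact this
      have : ((m+1).factorial : ℝ) = (m.factorial : ℝ) * (m+1) := by
        rw [Nat.factorial_succ]; push_cast; ring
      rw [this]
      nlinarith [hcast]

lemma alt0 (N : ℕ) : ∑ i ∈ range (N+1), (-1:ℝ)^i * (N.choose i) = if N = 0 then 1 else 0 := by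
  rcases eq_or_ne N 0 with h | h
  · subst h; simp
  · rw [if_neg h]
    have h1 := Int.alternating_sum_range_choose_of_ne h
    exact_mod_cast h1

lemma alt_sum (k j : ℕ) :
    ∑ m ∈ range (k+1), (-1:ℝ)^(m+k) * (k.choose m) * ff (m:ℝ) j
      = if j = k then (k.factorial : ℝ) else 0 := by
  rcases lt_or_ge k j with hkj | hjk
  · rw [if_neg (by omega)]
    apply Finset.sum_eq_zero
    intro m hm
    rw [mem_range] at hm
    rw [ff_nat, Nat.choose_eq_zero_of_lt (by omega : m < j)]
    simp
  · -- j ≤ k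
    have hsub : ∑ m ∈ range (k+1), (-1:ℝ)^(m+k) * (k.choose m) * ff (m:ℝ) j
        = ∑ m ∈ Finset.Ico j (k+1), (-1:ℝ)^(m+k) * (k.choose m) * ff (m:ℝ) j := by
      rw [Finset.range_eq_Ico]
      apply (Finset.sum_subset (Finset.Ico_subset_Ico (Nat.zero_le j) le_rfl) _).symm
      intro m hm hnm
      have : m < j := by
        simp only [Finset.mem_Ico] at hm hnm; omega
      rw [ff_nat, Nat.choose_eq_zero_of_lt this]; simp
    rw [hsub, Finset.sum_Ico_eq_sum_range]
    have hlen : k + 1 - j = (k - j) + 1 := by omega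
    rw [hlen]
    have hterm : ∀ i ∈ range ((k-j)+1),
        (-1:ℝ)^((j+i)+k) * (k.choose (j+i)) * ff ((j+i : ℕ):ℝ) j
        = ((k.choose j : ℝ) * (j.factorial : ℝ) * (-1:ℝ)^(k-j)) * ((-1:ℝ)^i * ((k-j).choose i : ℝ)) := by
      intro i hi
      rw [mem_range] at hi
      rw [ff_nat]
      have hji : j ≤ j + i := Nat.le_add_right _ _
      have hjik : j + i ≤ k := by omega
      have hcc : (k.choose (j+i) : ℝ) * ((j+i).choose j : ℝ) = (k.choose j : ℝ) * ((k-j).choose i : ℝ) := by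
        have := Nat.choose_mul (n := k) hji
        have h2 := congrArg (fun z : ℕ => (z : ℝ)) this
        push_cast at h2
        rw [Nat.add_sub_cancel_left] at h2
        exact_mod_cast h2
      have hsign : (-1:ℝ)^((j+i)+k) = (-1:ℝ)^(k-j) * (-1:ℝ)^i := by
        have : (j+i)+k = ((k-j) + i) + 2*j := by omega
        rw [this, pow_add, pow_add, pow_mul]
        norm_num
      rw [hsign]
      linear_combination ((-1:ℝ)^(k-j) * (-1:ℝ)^i * (j.factorial:ℝ)) * hcc
    rw [Finset.sum_congr rfl hterm, ← Finset.mul_sum, alt0]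
    rcases eq_or_lt_of_le hjk with h | h
    · subst h
      rw [if_pos (by omega : j - j = 0), if_pos rfl]
      simp
    · rw [if_neg (by omega : ¬ (k - j = 0)), if_neg (by omega : ¬ j = k)]
      ring

lemma dff_vdm (lam x : ℝ) : ∀ n : ℕ, dff lam (x+1) n
    = ∑ i ∈ range (n+1), (n.choose i : ℝ) * dff lam x i * dff lam 1 (n - i) := by
  intro n
  induction n with
  | zero => simp [dff_zero]
  | succ n ih =>
    have peel : ∑ i ∈ range (n+2), ((n+1).choose i : ℝ) * dff lam x i * dff lam 1 (n+1-i)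
        = (∑ i ∈ range (n+1), ((n+1).choose (i+1) : ℝ) * dff lam x (i+1) * dff lam 1 (n-i))
          + dff lam 1 (n+1) := by
      rw [Finset.sum_range_succ']
      simp [dff_zero]
    have pascal : ∀ i ∈ range (n+1),
        ((n+1).choose (i+1) : ℝ) * dff lam x (i+1) * dff lam 1 (n-i)
        = (n.choose i : ℝ) * dff lam x (i+1) * dff lam 1 (n-i)
          + (n.choose (i+1) : ℝ) * dff lam x (i+1) * dff lam 1 (n-i) := by
      intro i _
      rw [Nat.choose_succ_succ]
      push_cast
      ring
    have hB : (∑ i ∈ range (n+1), (n.choose (i+1) : ℝ) * dff lam x (i+1) * dff lam 1 (n-i))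
          + dff lam 1 (n+1)
        = ∑ j ∈ range (n+1), (n.choose j : ℝ) * dff lam x j * dff lam 1 (n+1-j) := by
      have h2 : ∑ j ∈ range (n+2), (n.choose j : ℝ) * dff lam x j * dff lam 1 (n+1-j)
          = (∑ i ∈ range (n+1), (n.choose (i+1) : ℝ) * dff lam x (i+1) * dff lam 1 (n-i))
            + dff lam 1 (n+1) := by
        rw [Finset.sum_range_succ']
        simp [dff_zero]
      rw [← h2, Finset.sum_range_succ, Nat.choose_succ_self]
      simp
    have expand : ∑ i ∈ range (n+2), ((n+1).choose i : ℝ) * dff lam x i * dff lam 1 (n+1-i)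
        = (∑ i ∈ range (n+1), (n.choose i : ℝ) * dff lam x i * (x - i*lam) * dff lam 1 (n-i))
          + ∑ i ∈ range (n+1),
              (n.choose i : ℝ) * dff lam x i * dff lam 1 (n-i) * (1 - ((n-i : ℕ) : ℝ) * lam) := by
      rw [peel, Finset.sum_congr rfl pascal, Finset.sum_add_distrib, add_assoc]
      congr 1
      · apply Finset.sum_congr rfl
        intro i _
        rw [dff_succ]
        ring
      · rw [hB]
        apply Finset.sum_congr rfl
        intro i hi
        rw [mem_range] at hi
        have h3 : n + 1 - i = (n - i) + 1 := by omega
        rw [h3, dff_succ]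
        ring
    rw [dff_succ, ih, expand, ← Finset.sum_add_distrib, Finset.sum_mul]
    apply Finset.sum_congr rfl
    intro i hi
    rw [mem_range] at hi
    rw [Nat.cast_sub (by omega : i ≤ n)]
    ring

lemma coeff_elamP (lam : ℝ) (n : ℕ) :
    PowerSeries.coeff (R := Polynomial ℝ) n (elamP lam) = Polynomial.C (dff lam 1 n / n.factorial) :=
  PowerSeries.coeff_mk _ _

lemma coeff_elamP_pow (lam : ℝ) (m n : ℕ) :
    PowerSeries.coeff (R := Polynomial ℝ) n (elamP lam ^ m)
      = Polynomial.C (dff lam (m : ℝ) n / n.factorial) := by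
  induction m generalizing n with
  | zero =>
    rw [pow_zero, PowerSeries.coeff_one, Nat.cast_zero, ← Nat.cast_zero (R := ℝ), dff_nat_zero]
    split_ifs with h
    · subst h; simp
    · simp
  | succ m ih =>
    rw [pow_succ, PowerSeries.coeff_mul, Finset.Nat.sum_antidiagonal_eq_sum_range_succ_mk]
    have hterm : ∀ i ∈ range (n+1),
        PowerSeries.coeff (R := Polynomial ℝ) i (elamP lam ^ m)
          * PowerSeries.coeff (R := Polynomial ℝ) (n - i) (elamP lam)
        = Polynomial.C ((n.choose i : ℝ) * dff lam (m : ℝ) i * dff lam 1 (n-i) / n.factorial) := by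
      intro i hi
      rw [mem_range] at hi
      rw [ih, coeff_elamP, ← Polynomial.C_mul]
      congr 1
      have hfac : (n.factorial : ℝ) = (n.choose i : ℝ) * i.factorial * (n-i).factorial := by
        rw [← Nat.choose_mul_factorial_mul_factorial (by omega : i ≤ n)]
        push_cast
        ring
      have h1 : (i.factorial : ℝ) ≠ 0 := Nat.cast_ne_zero.mpr (Nat.factorial_ne_zero i)
      have h2 : ((n-i).factorial : ℝ) ≠ 0 := Nat.cast_ne_zero.mpr (Nat.factorial_ne_zero _)
      have h3 : (n.choose i : ℝ) ≠ 0 := Nat.cast_ne_zero.mpr (Nat.choose_pos (by omega : i ≤ n)).ne'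
      rw [hfac]
      field_simp
    rw [Finset.sum_congr rfl hterm, ← map_sum]
    congr 1
    have := dff_vdm lam (m : ℝ) n
    push_cast
    rw [← Finset.sum_div, ← this]

lemma key (lam : ℝ) (r : ℕ) (S : ℕ → ℕ → ℝ)
    (hS : ∀ (n : ℕ) (x : ℝ), dff lam (x + r) n = ∑ k ∈ Finset.range (n + 1), S n k * ff x k)
    (n k : ℕ) :
    PowerSeries.coeff (R := Polynomial ℝ) n (elamP lam ^ r * (elamP lam - 1) ^ k)
      = Polynomial.C ((if k ≤ n then S n k * k.factorial else 0) / n.factorial) := by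
  have hexp : elamP lam ^ r * (elamP lam - 1) ^ k
      = ∑ m ∈ range (k+1),
          PowerSeries.C (R := Polynomial ℝ) (Polynomial.C ((-1:ℝ)^(m+k) * (k.choose m)))
            * elamP lam ^ (m + r) := by
    rw [sub_pow, Finset.mul_sum]
    apply Finset.sum_congr rfl
    intro m _
    rw [map_mul, map_mul, map_pow, map_pow, map_neg, map_neg, map_one, map_one, map_natCast,
      map_natCast, pow_add]
    ring
  rw [hexp, map_sum]
  have hterm : ∀ m ∈ range (k+1),
      PowerSeries.coeff (R := Polynomial ℝ) n
        (PowerSeries.C (R := Polynomial ℝ) (Polynomial.C ((-1:ℝ)^(m+k) * (k.choose m)))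
          * elamP lam ^ (m + r))
      = Polynomial.C ((-1:ℝ)^(m+k) * (k.choose m) * (dff lam ((m:ℝ) + r) n / n.factorial)) := by
    intro m _
    rw [PowerSeries.coeff_C_mul, coeff_elamP_pow, ← Polynomial.C_mul]
    congr 2
    push_cast
    ring
  rw [Finset.sum_congr rfl hterm, ← map_sum]
  congr 1
  have hreal : ∑ m ∈ range (k+1), (-1:ℝ)^(m+k) * (k.choose m) * (dff lam ((m:ℝ) + r) n / n.factorial)
      = (∑ m ∈ range (k+1), (-1:ℝ)^(m+k) * (k.choose m) * dff lam ((m:ℝ) + r) n) / n.factorial := by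
    rw [Finset.sum_div]
    apply Finset.sum_congr rfl
    intro m _
    ring
  rw [hreal]
  congr 1
  calc ∑ m ∈ range (k+1), (-1:ℝ)^(m+k) * (k.choose m) * dff lam ((m:ℝ) + r) n
      = ∑ m ∈ range (k+1), ∑ j ∈ range (n+1),
          S n j * ((-1:ℝ)^(m+k) * (k.choose m) * ff (m:ℝ) j) := by
        apply Finset.sum_congr rfl
        intro m _
        rw [hS n (m:ℝ), Finset.mul_sum]
        apply Finset.sum_congr rfl
        intro j _
        ring
    _ = ∑ j ∈ range (n+1), S n j * ∑ m ∈ range (k+1), (-1:ℝ)^(m+k) * (k.choose m) * ff (m:ℝ) j := by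
        rw [Finset.sum_comm]
        apply Finset.sum_congr rfl
        intro j _
        rw [Finset.mul_sum]
    _ = ∑ j ∈ range (n+1), S n j * (if j = k then (k.factorial:ℝ) else 0) := by
        apply Finset.sum_congr rfl
        intro j _
        rw [alt_sum]
    _ = if k ≤ n then S n k * k.factorial else 0 := by
        simp only [mul_ite, mul_zero]
        rw [Finset.sum_ite_eq' (range (n+1)) k (fun j => S n j * (k.factorial:ℝ))]
        simp [Nat.lt_succ_iff]

/-- in `ℝ[x][[t]]`, the series `x·(e_λ(t) - 1)` has zero constant term, so
`1 - x·(e_λ(t) - 1)` is invertible, and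
`e_λ(t)^r · (1 - x·(e_λ(t) - 1))⁻¹ = ∑_{n=0}^∞ F^{(r)}_{n,λ}(x) t^n / n!`, where
`F^{(r)}_{n,λ}(x) = ∑_{k=0}^n {n+r brace k+r}_{r,λ} k! x^k` and `S n k` denotes the
degenerate `r`-Stirling number of the second kind `{n+r brace k+r}_{r,λ}`, characterized by
`(x+r)_{n,λ} = ∑_{k=0}^n S n k (x)_k`. -/
theorem statement_5 (lam : ℝ) (hlam : lam ≠ 0) (r : ℕ)
    (S : ℕ → ℕ → ℝ)
    (hS : ∀ (n : ℕ) (x : ℝ), dff lam (x + r) n = ∑ k ∈ Finset.range (n + 1), S n k * ff x k) :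
    PowerSeries.constantCoeff (R := Polynomial ℝ)
        (PowerSeries.C (R := Polynomial ℝ) Polynomial.X * (elamP lam - 1)) = 0 ∧
    IsUnit (1 - PowerSeries.C (R := Polynomial ℝ) Polynomial.X * (elamP lam - 1)) ∧
    elamP lam ^ r *
        Ring.inverse (1 - PowerSeries.C (R := Polynomial ℝ) Polynomial.X * (elamP lam - 1)) =
      PowerSeries.mk fun n => (n.factorial : ℝ)⁻¹ •
        ∑ k ∈ Finset.range (n + 1),
          Polynomial.C (S n k * k.factorial) * Polynomial.X ^ k := by
  set E : PowerSeries (Polynomial ℝ) :=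
    PowerSeries.C (R := Polynomial ℝ) Polynomial.X * (elamP lam - 1) with hE
  set F : PowerSeries (Polynomial ℝ) :=
    PowerSeries.mk fun n => (n.factorial : ℝ)⁻¹ •
      ∑ k ∈ Finset.range (n + 1),
        Polynomial.C (S n k * k.factorial) * Polynomial.X ^ k with hF
  have hconstE : PowerSeries.constantCoeff (R := Polynomial ℝ) E = 0 := by
    rw [hE, map_mul, map_sub, map_one, PowerSeries.constantCoeff_C]
    have : PowerSeries.constantCoeff (R := Polynomial ℝ) (elamP lam) = 1 := by
      simp [elamP, PowerSeries.constantCoeff_mk, dff]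
    rw [this]
    ring
  have hUnit : IsUnit (1 - E) := by
    rw [PowerSeries.isUnit_iff_constantCoeff, map_sub, map_one, hconstE, sub_zero]
    exact isUnit_one
  have keyE : ∀ m k : ℕ,
      PowerSeries.coeff (R := Polynomial ℝ) m (elamP lam ^ r * E ^ k)
        = Polynomial.X ^ k *
            Polynomial.C ((if k ≤ m then S m k * k.factorial else 0) / m.factorial) := by
    intro m k
    have h1 : elamP lam ^ r * E ^ k
        = PowerSeries.C (R := Polynomial ℝ) (Polynomial.X ^ k)
            * (elamP lam ^ r * (elamP lam - 1) ^ k) := by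
      rw [hE, mul_pow, map_pow]
      ring
    rw [h1, PowerSeries.coeff_C_mul, key lam r S hS m k]
  have coeffF : ∀ m : ℕ, PowerSeries.coeff (R := Polynomial ℝ) m F
      = ∑ k ∈ range (m+1),
          Polynomial.C (S m k * k.factorial / m.factorial) * Polynomial.X ^ k := by
    intro m
    rw [hF, PowerSeries.coeff_mk, Finset.smul_sum]
    apply Finset.sum_congr rfl
    intro k _
    rw [← smul_mul_assoc, Polynomial.smul_C]
    congr 1
    rw [smul_eq_mul]
    ring
  have hFG : ∀ n m : ℕ, m ≤ n → PowerSeries.coeff (R := Polynomial ℝ) m F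
      = PowerSeries.coeff (R := Polynomial ℝ) m (elamP lam ^ r * ∑ k ∈ range (n+1), E ^ k) := by
    intro n m hmn
    rw [Finset.mul_sum, map_sum, Finset.sum_congr rfl (fun k _ => keyE m k), coeffF]
    rw [← Finset.sum_subset (Finset.range_subset_range.mpr (by omega : m + 1 ≤ n + 1))]
    · apply Finset.sum_congr rfl
      intro k hk
      rw [mem_range] at hk
      rw [if_pos (by omega : k ≤ m)]
      ring
    · intro k _ hk
      rw [mem_range, not_lt] at hk
      rw [if_neg (by omega : ¬ k ≤ m)]
      simp
  have hmain : F * (1 - E) = elamP lam ^ r := by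
    refine PowerSeries.ext fun n => ?_
    calc PowerSeries.coeff (R := Polynomial ℝ) n (F * (1 - E))
        = PowerSeries.coeff (R := Polynomial ℝ) n
            ((elamP lam ^ r * ∑ k ∈ range (n+1), E ^ k) * (1 - E)) := by
          rw [PowerSeries.coeff_mul, PowerSeries.coeff_mul]
          apply Finset.sum_congr rfl
          intro p hp
          rw [hFG n p.1 (Finset.HasAntidiagonal.antidiagonal.fst_le hp)]
      _ = PowerSeries.coeff (R := Polynomial ℝ) n (elamP lam ^ r * (1 - E ^ (n+1))) := by
          refine congrArg _ ?_
          rw [mul_assoc]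
          refine congrArg _ ?_
          calc (∑ k ∈ range (n+1), E ^ k) * (1 - E)
              = -((∑ k ∈ range (n+1), E ^ k) * (E - 1)) := by ring
            _ = 1 - E ^ (n+1) := by rw [geom_sum_mul]; ring
      _ = PowerSeries.coeff (R := Polynomial ℝ) n (elamP lam ^ r) := by
          rw [mul_sub, mul_one, map_sub, keyE n (n+1), if_neg (by omega : ¬ n + 1 ≤ n)]
          simp
  refine ⟨hconstE, hUnit, ?_⟩
  rw [← hmain, mul_assoc, Ring.mul_inverse_cancel _ hUnit, mul_one]
end
end

section
/- Fix a nonzero real number λ and integers m ≥ 0, r ≥ 0. In ℝ[[x]], the following identity holds: Σ_{n=0}^{∞} H_{n,λ} (n+r)_{m,λ} x^n = Σ_{k=0}^{m} {m+r brace k+r}_{r,λ} · k! · x^k · (1−x)^{−(k+1)} · (H_{k,λ} − C(k−λ,k) · log_λ(1−x)), where C(k−λ,k) = (k−λ)(k−1−λ)···(1−λ)/k!. -/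
open Finset PowerSeries

noncomputable section

/-- The generalized binomial coefficient `C(x,k) = x(x-1)⋯(x-k+1)/k!`. -/
def gbinom (x : ℝ) (k : ℕ) : ℝ := (∏ i ∈ Finset.range k, (x - i)) / k.factorial

/-- The degenerate harmonic numbers `H_{n,λ} = ∑_{k=1}^n (-1)^{k-1} (1/λ) C(λ,k)`,
with `H_{0,λ} = 0`. -/
def dH (lam : ℝ) (n : ℕ) : ℝ :=
  ∑ k ∈ Finset.Icc 1 n, (-1 : ℝ) ^ (k - 1) * (1 / lam) * gbinom lam k

/-- The degenerate logarithm evaluated at `1 - x`: the formal power series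
`log_λ(1-x) = ∑_{n≥1} (1/λ) C(λ,n) (-x)^n` in `ℝ[[x]]`. -/
def dlogNeg (lam : ℝ) : PowerSeries ℝ :=
  PowerSeries.mk fun n => if n = 0 then 0 else (-1 : ℝ) ^ n * (1 / lam) * gbinom lam n

/- ### Auxiliary lemmas -/


lemma gbinom_zero (x : ℝ) : gbinom x 0 = 1 := by simp [gbinom]

lemma gbinom_pascal (x : ℝ) (m : ℕ) :
    gbinom x (m+1) = gbinom (x-1) (m+1) + gbinom (x-1) m := by
  have h1 : ∏ i ∈ range (m+1), (x - i) = x * ∏ i ∈ range m, (x - 1 - i) := by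
    rw [Finset.prod_range_succ']
    rw [mul_comm]
    simp only [Nat.cast_zero, sub_zero]
    congr 1
    apply Finset.prod_congr rfl
    intro i _
    push_cast; ring
  have h2 : ∏ i ∈ range (m+1), (x - 1 - i) = (∏ i ∈ range m, (x - 1 - i)) * (x - 1 - m) := by
    rw [Finset.prod_range_succ]
  rw [gbinom, gbinom, gbinom, h1, h2]
  have hm : ((m+1).factorial : ℝ) ≠ 0 := by positivity
  have hm' : (m.factorial : ℝ) ≠ 0 := by positivity
  field_simp
  rw [Nat.factorial_succ]
  push_cast
  ring

def hseq (lam : ℝ) (j : ℕ) : ℝ := (-1 : ℝ)^(j-1) * gbinom lam j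

lemma hseq_succ (lam : ℝ) (m : ℕ) :
    hseq lam (m+1) = (-1:ℝ)^m * gbinom (lam-1) m - (-1:ℝ)^(m+1) * gbinom (lam-1) (m+1) := by
  rw [hseq, Nat.add_sub_cancel, gbinom_pascal lam m]
  ring

lemma sumh (lam : ℝ) (n : ℕ) :
    ∑ j ∈ Finset.Icc 1 n, hseq lam j = 1 - (-1:ℝ)^n * gbinom (lam-1) n := by
  induction n with
  | zero => simp [gbinom_zero]
  | succ n ih =>
    rw [Finset.sum_Icc_succ_top (by omega), ih, hseq_succ]
    ring

lemma keyV (lam : ℝ) (k N : ℕ) :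
    ∑ i ∈ range N, ((i+k).choose k : ℝ) * hseq lam (N-i)
      = ((N+k).choose k : ℝ) - (-1:ℝ)^N * gbinom (lam - 1 - k) N := by
  induction k generalizing N with
  | zero =>
    induction N with
    | zero => simp [gbinom_zero]
    | succ N ih =>
      rw [Finset.sum_range_succ']
      simp only [Nat.choose_zero_right, Nat.cast_one, one_mul] at ih ⊢
      have : ∀ i ∈ range N, hseq lam (N+1-(i+1)) = hseq lam (N-i) := by
        intro i _; congr 1; omega
      rw [Finset.sum_congr rfl this, ih, Nat.sub_zero, hseq_succ]
      push_cast
      ring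
  | succ k ihk =>
    induction N with
    | zero => simp [gbinom_zero]
    | succ N ihN =>
      have step : ∑ i ∈ range (N+1), ((i+(k+1)).choose (k+1) : ℝ) * hseq lam (N+1-i)
          = hseq lam (N+1) + ∑ i ∈ range N, ((i+(k+1)).choose (k+1) : ℝ) * hseq lam (N-i)
            + ∑ i ∈ range N, ((i+(k+1)).choose k : ℝ) * hseq lam (N-i) := by
        rw [Finset.sum_range_succ']
        have : ∀ i ∈ range N, ((i+1+(k+1)).choose (k+1) : ℝ) * hseq lam (N+1-(i+1))
            = ((i+(k+1)).choose (k+1) : ℝ) * hseq lam (N-i)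
              + ((i+(k+1)).choose k : ℝ) * hseq lam (N-i) := by
          intro i _
          have h1 : N+1-(i+1) = N-i := by omega
          have h2 : (i+1+(k+1)).choose (k+1) = (i+(k+1)).choose (k+1) + (i+(k+1)).choose k := by
            rw [show i+1+(k+1) = (i+(k+1))+1 by omega, Nat.choose_succ_succ']
            omega
          rw [h1, h2]
          push_cast; ring
        rw [Finset.sum_congr rfl this, Finset.sum_add_distrib]
        simp [Nat.choose_self]
        ring
      have ihk' : ∑ i ∈ range N, ((i+(k+1)).choose k : ℝ) * hseq lam (N-i)
          = ∑ i ∈ range (N+1), ((i+k).choose k : ℝ) * hseq lam (N+1-i) - hseq lam (N+1) := by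
        rw [Finset.sum_range_succ']
        have : ∀ i ∈ range N, ((i+1+k).choose k : ℝ) * hseq lam (N+1-(i+1))
            = ((i+(k+1)).choose k : ℝ) * hseq lam (N-i) := by
          intro i _
          have h1 : N+1-(i+1) = N-i := by omega
          have h2 : i+1+k = i+(k+1) := by omega
          rw [h1, h2]
        rw [Finset.sum_congr rfl this]
        simp [Nat.choose_zero_right]
      rw [step, ihN, ihk', ihk (N+1), hseq_succ]
      have hch : ((N+1+(k+1)).choose (k+1) : ℝ)
          = ((N+(k+1)).choose (k+1) : ℝ) + ((N+1+k).choose k : ℝ) := by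
        have h2 : (N+1+(k+1)).choose (k+1) = (N+(k+1)).choose (k+1) + (N+(k+1)).choose k := by
          rw [show N+1+(k+1) = (N+(k+1))+1 by omega, Nat.choose_succ_succ']
          omega
        rw [h2]; push_cast
        have : N+(k+1) = N+1+k := by omega
        rw [this]
      rw [hch]
      have hp : gbinom (lam - 1 - k) (N+1) = gbinom (lam-1-(k+1)) (N+1) + gbinom (lam-1-(k+1)) N := by
        have := gbinom_pascal (lam - 1 - k) N
        rw [this]
        congr 2 <;> push_cast <;> ring_nf
      rw [hp]
      push_cast
      ring

lemma trinom (x : ℝ) (n k : ℕ) (h : k ≤ n) :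
    gbinom x k * gbinom (x - k) (n - k) = (n.choose k : ℝ) * gbinom x n := by
  have hsplit : ∏ i ∈ range n, (x - i)
      = (∏ i ∈ range k, (x - i)) * ∏ i ∈ range (n-k), (x - k - i) := by
    nth_rewrite 1 [show n = k + (n-k) by omega]
    rw [Finset.prod_range_add]
    congr 1
    apply Finset.prod_congr rfl
    intro i _; push_cast; ring
  have hfac : (n.choose k : ℝ) * k.factorial * (n-k).factorial = n.factorial := by
    rw [← Nat.cast_mul, ← Nat.cast_mul, Nat.choose_mul_factorial_mul_factorial h]
  have hk : (k.factorial : ℝ) ≠ 0 := by positivity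
  have hnk : ((n-k).factorial : ℝ) ≠ 0 := by positivity
  have hn : (n.factorial : ℝ) ≠ 0 := by positivity
  rw [gbinom, gbinom, gbinom, hsplit]
  field_simp
  rw [← hfac]
  ring

lemma ff_nat_s16 (n k : ℕ) : ff (n:ℝ) k = ((n.descFactorial k : ℕ) : ℝ) := by
  induction k with
  | zero => simp [ff]
  | succ k ih =>
    rw [ff, Finset.prod_range_succ, ← ff, ih, Nat.descFactorial_succ]
    by_cases h : k < n
    · have : ((n - k : ℕ) : ℝ) = (n:ℝ) - k := by
        push_cast [Nat.cast_sub h.le]; ring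
      rw [Nat.cast_mul, this]; ring
    · have h0 : n - k = 0 := by omega
      rw [h0, Nat.zero_mul, Nat.cast_zero]
      rcases Nat.lt_or_ge n k with h1 | h1
      · rw [Nat.descFactorial_eq_zero_iff_lt.2 h1]; ring
      · have : n = k := by omega
        subst this; simp

lemma oneSubXinv : ((1 - PowerSeries.X : PowerSeries ℝ))⁻¹ = PowerSeries.mk fun _ => (1:ℝ) := by
  rw [PowerSeries.inv_eq_iff_mul_eq_one]
  · ext n
    rw [mul_sub, mul_one, map_sub]
    cases n with
    | zero => simp
    | succ n => simp [PowerSeries.coeff_succ_mul_X]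
  · simp

lemma powmk (k : ℕ) :
    (PowerSeries.mk fun _ => (1:ℝ))^(k+1) = PowerSeries.mk fun a => ((a+k).choose k : ℝ) := by
  induction k with
  | zero => ext a; simp
  | succ k ih =>
    rw [pow_succ, ih]
    ext n
    rw [PowerSeries.coeff_mul, Finset.Nat.sum_antidiagonal_eq_sum_range_succ_mk]
    simp only [PowerSeries.coeff_mk, mul_one]
    rw [← Nat.cast_sum, Nat.sum_range_add_choose n k]
    congr 2

lemma dH_eq (lam : ℝ) (n : ℕ) :
    dH lam n = (1/lam) * (1 - (-1:ℝ)^n * gbinom (lam-1) n) := by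
  rw [dH, ← sumh lam n, Finset.mul_sum]
  apply Finset.sum_congr rfl
  intro j _
  rw [hseq]; ring

lemma gk_eq (lam : ℝ) (k : ℕ) :
    gbinom ((k:ℝ) - lam) k = (-1:ℝ)^k * gbinom (lam-1) k := by
  rw [gbinom, gbinom]
  have h1 : ∏ i ∈ range k, ((k:ℝ) - lam - i) = ∏ i ∈ range k, (-(lam - 1 - i)) := by
    rw [← Finset.prod_range_reflect]
    apply Finset.prod_congr rfl
    intro j hj
    rw [Finset.mem_range] at hj
    have : ((k - 1 - j : ℕ) : ℝ) = (k:ℝ) - 1 - j := by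
      have : k - 1 - j = k - (1 + j) := by omega
      rw [this, Nat.cast_sub (by omega)]
      push_cast; ring
    rw [this]; ring
  have h2 : ∏ i ∈ range k, (-(lam - 1 - (i:ℝ))) = (-1:ℝ)^k * ∏ i ∈ range k, (lam - 1 - i) := by
    have : ∀ j ∈ range k, (-(lam - 1 - (j:ℝ))) = (-1) * (lam - 1 - j) := by
      intro j _; ring
    rw [Finset.prod_congr rfl this, Finset.prod_mul_distrib, Finset.prod_const,
      Finset.card_range]
  rw [h1, h2]
  ring

lemma coeffM (lam b a : ℝ) (j : ℕ) :
    (PowerSeries.coeff j) (PowerSeries.C (R := ℝ) a - PowerSeries.C (R := ℝ) b * dlogNeg lam)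
      = if j = 0 then a else b * (1/lam) * hseq lam j := by
  rw [map_sub, PowerSeries.coeff_C_mul, dlogNeg, PowerSeries.coeff_mk, PowerSeries.coeff_C]
  by_cases hj : j = 0
  · simp [hj]
  · rw [if_neg hj, if_neg hj, if_neg hj, hseq]
    obtain ⟨m, rfl⟩ : ∃ m, j = m + 1 := ⟨j - 1, by omega⟩
    rw [Nat.add_sub_cancel, pow_succ]
    ring

lemma coeffTerm (lam : ℝ) (k n : ℕ) :
    ff (n:ℝ) k * dH lam n = (k.factorial : ℝ) *
      (PowerSeries.coeff n) (PowerSeries.X ^ k *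
        ((1 - PowerSeries.X : PowerSeries ℝ)⁻¹) ^ (k + 1) *
        (PowerSeries.C (R := ℝ) (dH lam k) -
          PowerSeries.C (R := ℝ) (gbinom ((k : ℝ) - lam) k) * dlogNeg lam)) := by
  rw [oneSubXinv, powmk, mul_assoc, PowerSeries.coeff_X_pow_mul']
  by_cases hkn : k ≤ n
  · rw [if_pos hkn]
    rw [PowerSeries.coeff_mul, Finset.Nat.sum_antidiagonal_eq_sum_range_succ_mk]
    simp only [PowerSeries.coeff_mk, coeffM]
    rw [Finset.sum_range_succ, Nat.sub_self, if_pos rfl]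
    have hsum : ∑ i ∈ range (n-k), ((i+k).choose k : ℝ) *
        (if n - k - i = 0 then dH lam k else gbinom ((k:ℝ) - lam) k * (1/lam) * hseq lam (n-k-i))
        = gbinom ((k:ℝ) - lam) k * (1/lam) *
          (((n-k+k).choose k : ℝ) - (-1:ℝ)^(n-k) * gbinom (lam - 1 - k) (n-k)) := by
      rw [← keyV lam k (n-k), Finset.mul_sum]
      apply Finset.sum_congr rfl
      intro i hi
      rw [Finset.mem_range] at hi
      rw [if_neg (by omega)]
      ring
    rw [hsum]
    rw [show n-k+k = n by omega, ff_nat_s16, Nat.descFactorial_eq_factorial_mul_choose,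
      dH_eq, dH_eq, gk_eq]
    have hsign : (-1:ℝ)^k * ((-1:ℝ)^(n-k) * (gbinom (lam-1) k * gbinom (lam - 1 - k) (n-k)))
        = (-1:ℝ)^n * ((n.choose k : ℝ) * gbinom (lam-1) n) := by
      rw [trinom (lam-1) n k hkn, ← mul_assoc, ← pow_add, show k + (n-k) = n by omega]
    push_cast
    linear_combination (k.factorial : ℝ) * (1/lam) * hsign
  · rw [if_neg hkn, mul_zero, ff_nat_s16,
      Nat.descFactorial_eq_zero_iff_lt.2 (by omega), Nat.cast_zero, zero_mul]


/-- in `ℝ[[x]]`,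
`∑_{n=0}^∞ H_{n,λ} (n+r)_{m,λ} x^n
  = ∑_{k=0}^m {m+r brace k+r}_{r,λ} k! x^k (1-x)^{-(k+1)} (H_{k,λ} - C(k-λ,k) log_λ(1-x))`,
where `S n k` denotes the degenerate `r`-Stirling number of the second kind
`{n+r brace k+r}_{r,λ}`, characterized by `(x+r)_{n,λ} = ∑_{k=0}^n S n k (x)_k`. -/
theorem statement_16 (lam : ℝ) (hlam : lam ≠ 0) (m r : ℕ)
    (S : ℕ → ℕ → ℝ)
    (hS : ∀ (n : ℕ) (x : ℝ), dff lam (x + r) n = ∑ k ∈ Finset.range (n + 1), S n k * ff x k) :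
    (PowerSeries.mk fun n => dH lam n * dff lam ((n : ℝ) + r) m) =
      ∑ k ∈ Finset.range (m + 1), (S m k * k.factorial) •
        (PowerSeries.X ^ k * ((1 - PowerSeries.X : PowerSeries ℝ)⁻¹) ^ (k + 1) *
          (PowerSeries.C (R := ℝ) (dH lam k) -
            PowerSeries.C (R := ℝ) (gbinom ((k : ℝ) - lam) k) * dlogNeg lam)) := by
  ext n
  rw [PowerSeries.coeff_mk, map_sum, hS m (n:ℝ), Finset.mul_sum]
  apply Finset.sum_congr rfl
  intro k _
  rw [LinearMap.map_smul, smul_eq_mul, mul_assoc, ← coeffTerm lam k n]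
  ring
end
end
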